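/- Let f : ℝ^d → ℝ be L-smooth and u > 0. Then for all x, ‖∇f(x) - ∇f^u(x)‖ ≤ u L √d, where f^u(x) = E_{z ~ N(0,I_d)}[f(x + u z)]. -/

import Mathlib

open MeasureTheory ProbabilityTheory

noncomputable def stdGaussian (d : ℕ) : Measure (EuclideanSpace ℝ (Fin d)) :=
  Measure.map (WithLp.toLp 2) (Measure.pi fun _ => gaussianReal 0 1)

noncomputable def smoothed (d : ℕ) (f : EuclideanSpace ℝ (Fin d) → ℝ) (u : ℝ)
    (x : EuclideanSpace ℝ (Fin d)) : ℝ :=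
  ∫ z, f (x + u • z) ∂(stdGaussian d)

open scoped ENNReal NNReal
open Real Set Filter

lemma integrable_sq_exp : Integrable (fun x : ℝ => x^2 * Real.exp (-(1/2)*x^2)) := by
  have := integrable_rpow_mul_exp_neg_mul_sq (b := 1/2) (by norm_num) (s := 2) (by norm_num)
  simpa [Real.rpow_natCast] using this

lemma integral_sq_exp_Ioi :
    ∫ x in Ioi (0:ℝ), x^2 * Real.exp (-(1/2) * x^2) = Real.sqrt (2*Real.pi) / 2 := by
  have hint : IntegrableOn (fun x : ℝ => x^2 * Real.exp (-(1/2)*x^2) - Real.exp (-(1/2)*x^2)) (Ioi 0) :=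
    (integrable_sq_exp.sub (integrable_exp_neg_mul_sq (by norm_num))).integrableOn
  have hderiv : ∀ x ∈ Ioi (0:ℝ), HasDerivAt (fun x : ℝ => -x * Real.exp (-(1/2)*x^2))
      (x^2 * Real.exp (-(1/2)*x^2) - Real.exp (-(1/2)*x^2)) x := by
    intro x _
    have h1 : HasDerivAt (fun x : ℝ => -(1/2) * x^2) (-x) x := by
      simpa using ((hasDerivAt_pow 2 x).const_mul (-(1/2) : ℝ))
    have h2 : HasDerivAt (fun x : ℝ => Real.exp (-(1/2)*x^2)) (Real.exp (-(1/2)*x^2) * (-x)) x := h1.exp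
    have := ((hasDerivAt_id x).neg.mul h2)
    exact this.congr_deriv (by simp [id]; ring)
  have htend : Tendsto (fun x : ℝ => -x * Real.exp (-(1/2)*x^2)) atTop (nhds 0) := by
    have h := tendsto_rpow_abs_mul_exp_neg_mul_sq_cocompact (a := 1/2) (by norm_num) 1
    have h2 := h.mono_left _root_.atTop_le_cocompact
    have h3 : Tendsto (fun x : ℝ => -(|x| ^ (1:ℝ) * Real.exp (-(1/2) * x^2))) atTop (nhds 0) := by
      simpa using h2.neg
    refine h3.congr' ?_
    filter_upwards [eventually_ge_atTop (0:ℝ)] with x hx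
    rw [abs_of_nonneg hx, Real.rpow_one]
    ring
  have hcont : ContinuousWithinAt (fun x : ℝ => -x * Real.exp (-(1/2)*x^2)) (Ici 0) 0 :=
    (Continuous.mul continuous_neg (by continuity)).continuousWithinAt
  have key := integral_Ioi_of_hasDerivAt_of_tendsto hcont hderiv hint htend
  have key2 : (∫ x in Ioi (0:ℝ), (x^2 * Real.exp (-(1/2)*x^2) - Real.exp (-(1/2)*x^2))) = 0 := by
    rw [key]; norm_num
  rw [integral_sub integrable_sq_exp.integrableOn
    (integrable_exp_neg_mul_sq (b := 1/2) (by norm_num)).integrableOn, sub_eq_zero] at key2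
  rw [key2, integral_gaussian_Ioi]
  norm_num
  ring

lemma integral_sq_exp_real :
    ∫ x : ℝ, x^2 * Real.exp (-(1/2) * x^2) = Real.sqrt (2*Real.pi) := by
  have habs : ∀ x : ℝ, |x|^2 * Real.exp (-(1/2)*|x|^2) = x^2 * Real.exp (-(1/2)*x^2) := by
    intro x; rw [sq_abs]
  have h := integral_comp_abs (f := fun t : ℝ => t^2 * Real.exp (-(1/2)*t^2))
  simp only [habs] at h
  rw [h, integral_sq_exp_Ioi]
  ring
open MeasureTheory ProbabilityTheory Real Set Filter

lemma gaussianReal_eq_withDensity :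
    gaussianReal 0 1 = volume.withDensity
      (fun x => ((gaussianPDFReal 0 1 x).toNNReal : ℝ≥0∞)) := by
  rw [gaussianReal_of_var_ne_zero 0 one_ne_zero]
  rfl

lemma meas_pdf : Measurable (fun x => (gaussianPDFReal 0 1 x).toNNReal) :=
  (measurable_gaussianPDFReal 0 1).real_toNNReal

lemma pdf_smul_eq (g : ℝ → ℝ) (x : ℝ) :
    (gaussianPDFReal 0 1 x).toNNReal • g x = gaussianPDFReal 0 1 x * g x := by
  rw [NNReal.smul_def, Real.coe_toNNReal _ (gaussianPDFReal_nonneg 0 1 x), smul_eq_mul]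

lemma integral_gaussianReal_eq (g : ℝ → ℝ) :
    ∫ x, g x ∂(gaussianReal 0 1) = ∫ x, gaussianPDFReal 0 1 x * g x := by
  rw [gaussianReal_eq_withDensity, integral_withDensity_eq_integral_smul meas_pdf]
  exact integral_congr_ae (Filter.Eventually.of_forall fun x => pdf_smul_eq g x)

lemma integrable_gaussianReal_iff (g : ℝ → ℝ) :
    Integrable g (gaussianReal 0 1) ↔
      Integrable (fun x => gaussianPDFReal 0 1 x * g x) := by
  rw [gaussianReal_eq_withDensity, integrable_withDensity_iff_integrable_smul meas_pdf]
  constructor <;> intro h <;> refine h.congr (Filter.Eventually.of_forall fun x => ?_)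
  · exact pdf_smul_eq g x
  · exact (pdf_smul_eq g x).symm

lemma pdf_zero_one (x : ℝ) :
    gaussianPDFReal 0 1 x = (Real.sqrt (2*Real.pi))⁻¹ * Real.exp (-(1/2)*x^2) := by
  rw [gaussianPDFReal_def]
  simp only [NNReal.coe_one, mul_one, sub_zero]
  rw [show ∀ x:ℝ, -x^2/2 = -(1/2)*x^2 from fun x => by ring]

instance (d : ℕ) : IsProbabilityMeasure (stdGaussian d) :=
  ⟨by rw [_root_.stdGaussian, Measure.map_apply (WithLp.measurable_toLp 2 _) MeasurableSet.univ, Set.preimage_univ, ← Set.pi_univ Set.univ]; erw [Measure.pi_pi]; simp⟩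

lemma stdGaussian_map_eval (d : ℕ) (i : Fin d) :
    (stdGaussian d).map (fun z => z i) = gaussianReal 0 1 := by
  refine Measure.ext fun s hs => ?_
  rw [Measure.map_apply (show Measurable fun z : EuclideanSpace ℝ (Fin d) => z i from (measurable_pi_apply i).comp (WithLp.measurable_ofLp 2 _)) hs]
  have hpre : (fun z : Fin d → ℝ => z i) ⁻¹' s
      = Set.pi Set.univ (Function.update (fun _ : Fin d => (Set.univ : Set ℝ)) i s) := by
    exact Set.eval_preimage
  rw [_root_.stdGaussian, Measure.map_apply (WithLp.measurable_toLp 2 _) (show MeasurableSet ((fun z : EuclideanSpace ℝ (Fin d) => z i) ⁻¹' s) from (measurable_pi_apply i).comp (WithLp.measurable_ofLp 2 _) hs)]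
  show (Measure.pi fun _ => gaussianReal 0 1) ((fun z : Fin d → ℝ => z i) ⁻¹' s) = _
  rw [hpre]; erw [Measure.pi_pi]
  rw [Fintype.prod_eq_single i (fun j hj => by rw [Function.update_of_ne hj]; simp)]
  rw [Function.update_self]

lemma integrable_sq_gaussianReal : Integrable (fun x : ℝ => x^2) (gaussianReal 0 1) := by
  rw [integrable_gaussianReal_iff]
  refine (integrable_sq_exp.const_mul ((Real.sqrt (2*Real.pi))⁻¹)).congr
    (Filter.Eventually.of_forall fun x => ?_)
  simp only [pdf_zero_one]; ring

lemma integral_sq_gaussianReal : ∫ x, x^2 ∂(gaussianReal 0 1) = 1 := by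
  rw [integral_gaussianReal_eq]
  have : ∀ x : ℝ, gaussianPDFReal 0 1 x * x^2
      = (Real.sqrt (2*Real.pi))⁻¹ * (x^2 * Real.exp (-(1/2)*x^2)) := by
    intro x; rw [pdf_zero_one]; ring
  rw [funext this, MeasureTheory.integral_const_mul, integral_sq_exp_real]
  rw [inv_mul_cancel₀]
  positivity

lemma integrable_eval_sq (d : ℕ) (i : Fin d) :
    Integrable (fun z : EuclideanSpace ℝ (Fin d) => (z i)^2) (stdGaussian d) := by
  have h := integrable_sq_gaussianReal
  rw [← stdGaussian_map_eval d i] at h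
  exact (integrable_map_measure (by fun_prop)
    (show Measurable fun z : EuclideanSpace ℝ (Fin d) => z i from (measurable_pi_apply i).comp (WithLp.measurable_ofLp 2 _)).aemeasurable).mp h

lemma integral_eval_sq (d : ℕ) (i : Fin d) :
    ∫ z, (z i)^2 ∂(stdGaussian d) = 1 := by
  have h := integral_sq_gaussianReal
  rw [← stdGaussian_map_eval d i, integral_map
    (show Measurable fun z : EuclideanSpace ℝ (Fin d) => z i from (measurable_pi_apply i).comp (WithLp.measurable_ofLp 2 _)).aemeasurable
    (by fun_prop)] at h
  exact h

lemma normsq_eq_sum (d : ℕ) (z : EuclideanSpace ℝ (Fin d)) : ‖z‖^2 = ∑ i, (z i)^2 := by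
  rw [EuclideanSpace.norm_eq, Real.sq_sqrt (by positivity)]
  congr 1; ext i; rw [Real.norm_eq_abs, sq_abs]

lemma integrable_normsq (d : ℕ) :
    Integrable (fun z : EuclideanSpace ℝ (Fin d) => ‖z‖^2) (stdGaussian d) := by
  have : Integrable (fun z : EuclideanSpace ℝ (Fin d) => ∑ i, (z i)^2) (stdGaussian d) :=
    integrable_finset_sum _ (fun i _ => integrable_eval_sq d i)
  exact this.congr (Filter.Eventually.of_forall fun z => (normsq_eq_sum d z).symm)

lemma integral_normsq (d : ℕ) :
    ∫ z, ‖z‖^2 ∂(stdGaussian d) = d := by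
  rw [integral_congr_ae (Filter.Eventually.of_forall (normsq_eq_sum d)),
    integral_finset_sum _ (fun i _ => integrable_eval_sq d i)]
  simp [integral_eval_sq]

lemma integrable_norm (d : ℕ) :
    Integrable (fun z : EuclideanSpace ℝ (Fin d) => ‖z‖) (stdGaussian d) := by
  refine Integrable.mono' (g := fun z : EuclideanSpace ℝ (Fin d) => 1 + ‖z‖^2)
    ((integrable_const (1:ℝ)).add (integrable_normsq d))
    (by fun_prop) (Filter.Eventually.of_forall fun z => ?_)
  rw [Real.norm_eq_abs, abs_of_nonneg (norm_nonneg z)]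
  show ‖z‖ ≤ 1 + ‖z‖^2
  nlinarith [norm_nonneg z, sq_nonneg (‖z‖ - 1)]

lemma integral_norm_le (d : ℕ) :
    ∫ z, ‖z‖ ∂(stdGaussian d) ≤ Real.sqrt d := by
  rcases Nat.eq_zero_or_pos d with rfl | hd
  · have h0 : ∀ z : EuclideanSpace ℝ (Fin 0), ‖z‖ = 0 := fun z => by
      rw [Subsingleton.elim z 0, norm_zero]
    simp [h0]
  · have hsd : (0:ℝ) < Real.sqrt d := Real.sqrt_pos.mpr (by positivity)
    have hb : ∀ z : EuclideanSpace ℝ (Fin d), ‖z‖ ≤ (‖z‖^2 + d) / (2 * Real.sqrt d) := by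
      intro z
      rw [le_div_iff₀ (by positivity)]
      have h0 : 0 ≤ (‖z‖ - Real.sqrt d)^2 := sq_nonneg _
      have h1 : Real.sqrt d ^ 2 = (d:ℝ) := Real.sq_sqrt (by positivity)
      nlinarith
    calc ∫ z, ‖z‖ ∂(stdGaussian d) ≤ ∫ z, (‖z‖^2 + d) / (2 * Real.sqrt d) ∂(stdGaussian d) := by
          refine integral_mono (integrable_norm d) ?_ hb
          exact ((integrable_normsq d).add (integrable_const _)).div_const _
      _ = ((∫ z, ‖z‖^2 ∂(stdGaussian d)) + d) / (2 * Real.sqrt d) := by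
          rw [integral_div, integral_add (integrable_normsq d) (integrable_const _)]
          simp
      _ = Real.sqrt d := by
          rw [integral_normsq]
          rw [div_eq_iff (by positivity)]
          have h1 : Real.sqrt d * Real.sqrt d = (d:ℝ) := Real.mul_self_sqrt (by positivity)
          nlinarith [h1]

set_option maxHeartbeats 1000000 in
theorem grad_smoothed_close (d : ℕ) (f : EuclideanSpace ℝ (Fin d) → ℝ) (L u : ℝ)
    (hu : 0 < u) (hdiff : Differentiable ℝ f)
    (hf : ∀ x y, ‖gradient f x - gradient f y‖ ≤ L * ‖x - y‖) :
    ∀ x, ‖gradient f x - gradient (smoothed d f u) x‖ ≤ u * L * Real.sqrt d := by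
  intro x₀
  rcases Nat.eq_zero_or_pos d with rfl | hd
  · rw [Subsingleton.elim (gradient f x₀ - gradient (smoothed 0 f u) x₀) 0, norm_zero]
    simp
  -- setup
  set g : EuclideanSpace ℝ (Fin d) → EuclideanSpace ℝ (Fin d) →L[ℝ] ℝ :=
    fun y => fderiv ℝ f y with hg
  have hgrad_eq : ∀ y : EuclideanSpace ℝ (Fin d), gradient f y = (InnerProductSpace.toDual ℝ (EuclideanSpace ℝ (Fin d))).symm (g y) := fun y => rfl
  have hg_lip : ∀ a b : EuclideanSpace ℝ (Fin d), ‖g a - g b‖ ≤ L * ‖a - b‖ := by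
    intro a b
    have h1 : gradient f a - gradient f b
        = (InnerProductSpace.toDual ℝ (EuclideanSpace ℝ (Fin d))).symm (g a - g b) := by
      rw [hgrad_eq, hgrad_eq, map_sub]
    have h2 := hf a b
    rw [h1, LinearIsometryEquiv.norm_map] at h2
    exact h2
  have hL0 : 0 ≤ L := by
    have i0 : Fin d := ⟨0, hd⟩
    have h := hf 0 (EuclideanSpace.single i0 1)
    have hn : ‖(0 : EuclideanSpace ℝ (Fin d)) - EuclideanSpace.single i0 1‖ = 1 := by
      rw [zero_sub, norm_neg, EuclideanSpace.norm_single, norm_one]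
    rw [hn, mul_one] at h
    exact le_trans (norm_nonneg _) h
  have hgcont : Continuous g := by
    rcases eq_or_lt_of_le hL0 with hL | hL
    · have : ∀ a b, g a = g b := by
        intro a b
        have := hg_lip a b
        rw [← hL, zero_mul] at this
        rwa [norm_le_zero_iff, sub_eq_zero] at this
      exact (continuous_const (y := g x₀)).congr fun a => this x₀ a
    · refine (LipschitzWith.of_dist_le_mul (K := L.toNNReal) fun a b => ?_).continuous
      rw [dist_eq_norm, dist_eq_norm, Real.coe_toNNReal _ hL0]
      exact hg_lip a b
  -- mean value bound
  have hmv : ∀ y : EuclideanSpace ℝ (Fin d), |f y - f x₀| ≤ (‖g x₀‖ + L * ‖y - x₀‖) * ‖y - x₀‖ := by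
    intro y
    have hconv : Convex ℝ (Metric.closedBall x₀ ‖y - x₀‖) := convex_closedBall _ _
    have := hconv.norm_image_sub_le_of_norm_fderiv_le
      (f := f) (C := ‖g x₀‖ + L * ‖y - x₀‖)
      (fun w _ => hdiff w)
      (fun w hw => by
        have h1 : ‖g w - g x₀‖ ≤ L * ‖w - x₀‖ := hg_lip w x₀
        have h2 : ‖w - x₀‖ ≤ ‖y - x₀‖ := by
          rw [Metric.mem_closedBall, dist_eq_norm] at hw; exact hw
        have h3 : ‖g w‖ ≤ ‖g x₀‖ + ‖g w - g x₀‖ := by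
          have := norm_add_le (g x₀) (g w - g x₀); simpa using this
        have h4 : L * ‖w - x₀‖ ≤ L * ‖y - x₀‖ := mul_le_mul_of_nonneg_left h2 hL0
        linarith)
      (Metric.mem_closedBall_self (norm_nonneg _))
      (by rw [Metric.mem_closedBall, dist_eq_norm])
    rwa [Real.norm_eq_abs] at this
  -- integrability of z ↦ f (x + u • z) for any x
  have hint_f : ∀ x : EuclideanSpace ℝ (Fin d), Integrable (fun z : EuclideanSpace ℝ (Fin d) => f (x + u • z)) (stdGaussian d) := by
    intro x
    set c := ‖x - x₀‖ with hc
    have hc0 : 0 ≤ c := norm_nonneg _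
    refine Integrable.mono'
      (g := fun z : EuclideanSpace ℝ (Fin d) => |f x₀| + (‖g x₀‖ + L * (c + u * ‖z‖)) * (c + u * ‖z‖)) ?_ ?_
      (Filter.Eventually.of_forall fun z => ?_)
    · have e1 : ∀ z : EuclideanSpace ℝ (Fin d), |f x₀| + (‖g x₀‖ + L * (c + u * ‖z‖)) * (c + u * ‖z‖)
          = (|f x₀| + (‖g x₀‖ + L*c)*c) + ((‖g x₀‖ + L*c)*u + L*u*c) * ‖z‖
            + (L*u^2) * ‖z‖^2 := fun z => by ring
      rw [funext e1]
      exact (((integrable_const _).add ((integrable_norm d).const_mul _)).add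
        ((integrable_normsq d).const_mul _))
    · exact ((hdiff.continuous.comp
        (show Continuous fun z : EuclideanSpace ℝ (Fin d) => x + u • z by fun_prop)).aestronglyMeasurable)
    · have h1 := hmv (x + u • z)
      have h2 : ‖x + u • z - x₀‖ ≤ c + u * ‖z‖ := by
        have : x + u • z - x₀ = (x - x₀) + u • z := by abel
        rw [this]
        refine (norm_add_le _ _).trans ?_
        rw [norm_smul, Real.norm_eq_abs, abs_of_pos hu]
      have h3 : 0 ≤ ‖x + u • z - x₀‖ := norm_nonneg _
      have h4 : 0 ≤ u * ‖z‖ := by positivity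
      rw [Real.norm_eq_abs]
      show |f (x + u • z)| ≤ |f x₀| + (‖g x₀‖ + L * (c + u * ‖z‖)) * (c + u * ‖z‖)
      have h5 : |f (x + u • z)| ≤ |f x₀| + |f (x + u • z) - f x₀| := by
        have := abs_add_le (f x₀) (f (x + u • z) - f x₀); simpa using this
      have h6 : (‖g x₀‖ + L * ‖x + u • z - x₀‖) * ‖x + u • z - x₀‖
          ≤ (‖g x₀‖ + L * (c + u * ‖z‖)) * (c + u * ‖z‖) := by
        have hgn : 0 ≤ ‖g x₀‖ := norm_nonneg _
        nlinarith [mul_le_mul_of_nonneg_left h2 hL0, mul_nonneg hL0 h3]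
      linarith
  -- derivative of smoothed
  have hbound_int : Integrable (fun z : EuclideanSpace ℝ (Fin d) => ‖g x₀‖ + L + L * u * ‖z‖) (stdGaussian d) :=
    (integrable_const _).add ((integrable_norm d).const_mul _)
  have hgz_meas : AEStronglyMeasurable (fun z : EuclideanSpace ℝ (Fin d) => g (x₀ + u • z)) (stdGaussian d) :=
    (hgcont.comp
      (show Continuous fun z : EuclideanSpace ℝ (Fin d) => x₀ + u • z by fun_prop)).aestronglyMeasurable
  have hFD : HasFDerivAt (fun x => smoothed d f u x) (∫ z, g (x₀ + u • z) ∂(stdGaussian d)) x₀ := by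
    refine hasFDerivAt_integral_of_dominated_of_fderiv_le
      (F := fun x z => f (x + u • z)) (F' := fun x z => g (x + u • z))
      (bound := fun z : EuclideanSpace ℝ (Fin d) => ‖g x₀‖ + L + L * u * ‖z‖)
      (Metric.ball_mem_nhds x₀ one_pos) ?_ (hint_f x₀) hgz_meas ?_ hbound_int ?_
    · exact Filter.Eventually.of_forall fun x =>
        ((hdiff.continuous.comp
          (show Continuous fun z : EuclideanSpace ℝ (Fin d) => x + u • z by fun_prop)).aestronglyMeasurable)
    · refine Filter.Eventually.of_forall fun z => fun x hx => ?_
      have h1 : ‖g (x + u • z) - g x₀‖ ≤ L * ‖x + u • z - x₀‖ := hg_lip _ _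
      have h2 : ‖x + u • z - x₀‖ ≤ 1 + u * ‖z‖ := by
        have he : x + u • z - x₀ = (x - x₀) + u • z := by abel
        rw [he]
        refine (norm_add_le _ _).trans ?_
        rw [norm_smul, Real.norm_eq_abs, abs_of_pos hu]
        have : ‖x - x₀‖ ≤ 1 := le_of_lt (by rwa [Metric.mem_ball, dist_eq_norm] at hx)
        linarith
      have h3 : ‖g (x + u • z)‖ ≤ ‖g x₀‖ + ‖g (x + u • z) - g x₀‖ := by
        have := norm_add_le (g x₀) (g (x + u • z) - g x₀); simpa using this
      have h4 : L * ‖x + u • z - x₀‖ ≤ L * (1 + u * ‖z‖) := mul_le_mul_of_nonneg_left h2 hL0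
      have : L * (1 + u * ‖z‖) = L + L * u * ‖z‖ := by ring
      show ‖g (x + u • z)‖ ≤ ‖g x₀‖ + L + L * u * ‖z‖
      linarith
    · refine Filter.Eventually.of_forall fun z => fun x _ => ?_
      have h := ((hdiff (x + u • z)).hasFDerivAt.comp x
        ((hasFDerivAt_id x).add_const (u • z)))
      simpa [Function.comp_def] using h
  have hint_g : Integrable (fun z : EuclideanSpace ℝ (Fin d) => g (x₀ + u • z)) (stdGaussian d) := by
    refine hbound_int.mono' hgz_meas (Filter.Eventually.of_forall fun z => ?_)
    have h1 : ‖g (x₀ + u • z) - g x₀‖ ≤ L * ‖x₀ + u • z - x₀‖ := hg_lip _ _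
    have h2 : ‖x₀ + u • z - x₀‖ = u * ‖z‖ := by
      have he : x₀ + u • z - x₀ = u • z := by abel
      rw [he, norm_smul, Real.norm_eq_abs, abs_of_pos hu]
    have h3 : ‖g (x₀ + u • z)‖ ≤ ‖g x₀‖ + ‖g (x₀ + u • z) - g x₀‖ := by
      have := norm_add_le (g x₀) (g (x₀ + u • z) - g x₀); simpa using this
    rw [h2] at h1
    nlinarith [mul_nonneg (mul_nonneg hL0 hu.le) (norm_nonneg z)]
  -- gradient of smoothed
  have hgrad_smoothed : gradient (smoothed d f u) x₀
      = ∫ z, gradient f (x₀ + u • z) ∂(stdGaussian d) := by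
    have h1 : fderiv ℝ (smoothed d f u) x₀ = ∫ z, g (x₀ + u • z) ∂(stdGaussian d) :=
      hFD.fderiv
    have h2 : gradient (smoothed d f u) x₀
        = (InnerProductSpace.toDual ℝ (EuclideanSpace ℝ (Fin d))).symm (∫ z, g (x₀ + u • z) ∂(stdGaussian d)) := by
      rw [← h1]; rfl
    rw [h2]
    have h3 := (InnerProductSpace.toDual ℝ (EuclideanSpace ℝ (Fin d))).symm.toLinearIsometry.integral_comp_comm
      (fun z : EuclideanSpace ℝ (Fin d) => g (x₀ + u • z)) (μ := stdGaussian d)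
    have e0 : (InnerProductSpace.toDual ℝ (EuclideanSpace ℝ (Fin d))).symm
        (∫ z, g (x₀ + u • z) ∂(stdGaussian d))
        = (InnerProductSpace.toDual ℝ (EuclideanSpace ℝ (Fin d))).symm.toLinearIsometry
        (∫ z, g (x₀ + u • z) ∂(stdGaussian d)) := rfl
    rw [e0, ← h3]
    exact integral_congr_ae (Filter.Eventually.of_forall fun z => rfl)
  -- conclusion
  have hint_grad : Integrable (fun z : EuclideanSpace ℝ (Fin d) => gradient f (x₀ + u • z)) (stdGaussian d) := by
    have := ((InnerProductSpace.toDual ℝ (EuclideanSpace ℝ (Fin d))).symm.toLinearIsometry.toContinuousLinearMap).integrable_comp hint_g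
    exact this
  rw [hgrad_smoothed]
  have hsub : gradient f x₀ - ∫ z, gradient f (x₀ + u • z) ∂(stdGaussian d)
      = ∫ z, (gradient f x₀ - gradient f (x₀ + u • z)) ∂(stdGaussian d) := by
    rw [integral_sub (integrable_const _) hint_grad, integral_const]
    simp
  rw [hsub]
  have hnorm : ∀ z : EuclideanSpace ℝ (Fin d), ‖gradient f x₀ - gradient f (x₀ + u • z)‖ ≤ L * u * ‖z‖ := by
    intro z
    refine (hf x₀ (x₀ + u • z)).trans ?_
    have he : x₀ - (x₀ + u • z) = -(u • z) := by abel
    rw [he, norm_neg, norm_smul, Real.norm_eq_abs, abs_of_pos hu, mul_assoc]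
  refine (norm_integral_le_of_norm_le ((integrable_norm d).const_mul (L*u))
    (Filter.Eventually.of_forall hnorm)).trans ?_
  rw [MeasureTheory.integral_const_mul]
  calc L * u * ∫ z, ‖z‖ ∂(stdGaussian d) ≤ L * u * Real.sqrt d := by
        exact mul_le_mul_of_nonneg_left (integral_norm_le d) (by positivity)
    _ = u * L * Real.sqrt d := by ring
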